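/- Let α ∈ (0,1) and let X be a real random variable with E[max(0,−X)] < ∞. Then ES_α(X) = min over s ∈ ℝ of −(1−α)^{−1}( E[X·1{−X ≥ s}] + s·(α − P[−X < s]) ); in particular the infimum over s of this expression is attained and equals ES_α(X). -/

import Mathlib

open MeasureTheory Set

/-- The `α`-quantile of a real random variable `X`:
`q_α(X) = inf {x ∈ ℝ : P[X ≤ x] ≥ α}`. -/
noncomputable def quantile {Ω : Type*} [MeasurableSpace Ω] (μ : Measure Ω)
    (X : Ω → ℝ) (α : ℝ) : ℝ :=
  sInf {x : ℝ | ENNReal.ofReal α ≤ μ {ω | X ω ≤ x}}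

/-- Expected Shortfall at level `α`:
`ES_α(X) = -(1-α)⁻¹ (E[X·1{-X ≥ q_α(-X)}] + q_α(-X)·(α - P[-X < q_α(-X)]))`. -/
noncomputable def ES {Ω : Type*} [MeasurableSpace Ω] (μ : Measure Ω)
    (X : Ω → ℝ) (α : ℝ) : ℝ :=
  - (1 - α)⁻¹ * ((∫ ω in {ω | quantile μ (fun ω' => - X ω') α ≤ - X ω}, X ω ∂μ)
    + quantile μ (fun ω' => - X ω') α
      * (α - (μ {ω | - X ω < quantile μ (fun ω' => - X ω') α}).toReal))

/-- The objective function `s ↦ -(1-α)⁻¹ (E[X·1{-X ≥ s}] + s·(α - P[-X < s]))`. -/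
noncomputable def shortfallObjective {Ω : Type*} [MeasurableSpace Ω] (μ : Measure Ω)
    (X : Ω → ℝ) (α : ℝ) (s : ℝ) : ℝ :=
  - (1 - α)⁻¹ * ((∫ ω in {ω | s ≤ - X ω}, X ω ∂μ) + s * (α - (μ {ω | - X ω < s}).toReal))

lemma quantile_spec {Ω : Type*} [MeasurableSpace Ω] (μ : Measure Ω) [IsProbabilityMeasure μ]
    (Y : Ω → ℝ) (hY : Measurable Y) (α : ℝ) (hα : α ∈ Set.Ioo (0:ℝ) 1) :
    ENNReal.ofReal α ≤ μ {ω | Y ω ≤ quantile μ Y α} ∧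
      μ {ω | Y ω < quantile μ Y α} ≤ ENNReal.ofReal α := by
  set S : Set ℝ := {x : ℝ | ENNReal.ofReal α ≤ μ {ω | Y ω ≤ x}} with hSdef
  have hmono : ∀ {x y : ℝ}, x ≤ y → x ∈ S → y ∈ S := by
    intro x y hxy hx
    exact le_trans hx (measure_mono fun ω hω => le_trans hω hxy)
  have hfrac : ∀ {n m : ℕ}, n ≤ m → (1:ℝ)/(m+1) ≤ 1/(n+1) := by
    intro n m h
    apply one_div_le_one_div_of_le (by positivity)
    exact_mod_cast Nat.succ_le_succ h
  have hne : S.Nonempty := by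
    have hmon : Monotone (fun n : ℕ => {ω | Y ω ≤ (n:ℝ)}) := by
      intro n m h ω hω
      simp only [mem_setOf_eq] at hω ⊢
      exact le_trans hω (by exact_mod_cast h)
    have hU : (⋃ n : ℕ, {ω | Y ω ≤ (n:ℝ)}) = univ := by
      ext ω
      simp only [mem_iUnion, mem_setOf_eq, mem_univ, iff_true]
      exact exists_nat_ge (Y ω)
    have hsup := hmon.measure_iUnion (μ := μ)
    rw [hU, measure_univ] at hsup
    have hlt : ENNReal.ofReal α < 1 := by
      rw [← ENNReal.ofReal_one]
      exact ENNReal.ofReal_lt_ofReal_iff_of_nonneg hα.1.le |>.mpr hα.2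
    rw [hsup] at hlt
    obtain ⟨n, hn⟩ := lt_iSup_iff.mp hlt
    exact ⟨(n:ℝ), hn.le⟩
  have hbdd : BddBelow S := by
    have hant : Antitone (fun n : ℕ => {ω | Y ω ≤ -(n:ℝ)}) := by
      intro n m h ω hω
      simp only [mem_setOf_eq] at hω ⊢
      refine le_trans hω (neg_le_neg ?_)
      exact_mod_cast h
    have hI : (⋂ n : ℕ, {ω | Y ω ≤ -(n:ℝ)}) = ∅ := by
      ext ω
      simp only [mem_iInter, mem_setOf_eq, mem_empty_iff_false, iff_false, not_forall, not_le]
      obtain ⟨n, hn⟩ := exists_nat_gt (-(Y ω))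
      exact ⟨n, by linarith⟩
    have hinf := hant.measure_iInter (μ := μ)
      (fun n => (measurableSet_le hY measurable_const).nullMeasurableSet)
      ⟨0, measure_ne_top μ _⟩
    rw [hI, measure_empty] at hinf
    have h0 : (0:ENNReal) < ENNReal.ofReal α := ENNReal.ofReal_pos.mpr hα.1
    rw [hinf] at h0
    obtain ⟨n, hn⟩ := iInf_lt_iff.mp h0
    refine ⟨-(n:ℝ), fun x hx => ?_⟩
    by_contra hlt
    push_neg at hlt
    exact absurd (le_trans hx (measure_mono fun ω hω => le_trans hω hlt.le)) (not_le.mpr hn)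
  have hq : quantile μ Y α = sInf S := rfl
  constructor
  · have hIq : {ω | Y ω ≤ sInf S} = ⋂ n : ℕ, {ω | Y ω ≤ sInf S + 1/(n+1)} := by
      ext ω
      simp only [mem_iInter, mem_setOf_eq]
      constructor
      · intro h n
        have : (0:ℝ) < 1/(n+1) := by positivity
        linarith
      · intro h
        by_contra hlt
        push_neg at hlt
        obtain ⟨n, hn⟩ := exists_nat_one_div_lt (sub_pos.mpr hlt)
        have := h n
        linarith
    have hant : Antitone (fun n : ℕ => {ω | Y ω ≤ sInf S + 1/((n:ℝ)+1)}) := by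
      intro n m h ω hω
      simp only [mem_setOf_eq] at hω ⊢
      exact le_trans hω (by have := hfrac h; linarith)
    rw [hq, hIq, hant.measure_iInter
      (fun n => (measurableSet_le hY measurable_const).nullMeasurableSet)
      ⟨0, measure_ne_top μ _⟩]
    refine le_iInf fun n => ?_
    have h1 : sInf S < sInf S + 1/((n:ℝ)+1) := by
      have : (0:ℝ) < 1/((n:ℝ)+1) := by positivity
      linarith
    obtain ⟨y, hyS, hy⟩ := (csInf_lt_iff hbdd hne).mp h1
    exact hmono hy.le hyS
  · have hUq : {ω | Y ω < sInf S} = ⋃ n : ℕ, {ω | Y ω ≤ sInf S - 1/((n:ℝ)+1)} := by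
      ext ω
      simp only [mem_iUnion, mem_setOf_eq]
      constructor
      · intro h
        obtain ⟨n, hn⟩ := exists_nat_one_div_lt (sub_pos.mpr h)
        exact ⟨n, by linarith⟩
      · rintro ⟨n, hn⟩
        have : (0:ℝ) < 1/((n:ℝ)+1) := by positivity
        linarith
    have hmon : Monotone (fun n : ℕ => {ω | Y ω ≤ sInf S - 1/((n:ℝ)+1)}) := by
      intro n m h ω hω
      simp only [mem_setOf_eq] at hω ⊢
      exact le_trans hω (by have := hfrac h; linarith)
    rw [hq, hUq, hmon.measure_iUnion]
    refine iSup_le fun n => ?_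
    have hnotin : sInf S - 1/((n:ℝ)+1) ∉ S := by
      intro hmem
      have := csInf_le hbdd hmem
      have hpos : (0:ℝ) < 1/((n:ℝ)+1) := by positivity
      linarith
    exact (not_le.mp hnotin).le

/-- Expected Shortfall is the minimum over `s ∈ ℝ` of
`-(1-α)⁻¹ (E[X·1{-X ≥ s}] + s·(α - P[-X < s]))`; in particular the infimum is attained. -/
theorem es_eq_min_shortfallObjective {Ω : Type*} [MeasurableSpace Ω] (μ : Measure Ω)
    [IsProbabilityMeasure μ] (α : ℝ) (hα : α ∈ Set.Ioo (0 : ℝ) 1)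
    (X : Ω → ℝ) (hX : Measurable X)
    (hint : Integrable (fun ω => max 0 (- X ω)) μ) :
    IsLeast (Set.range (shortfallObjective μ X α)) (ES μ X α) := by
  have hY : Measurable fun ω => - X ω := hX.neg
  set q : ℝ := quantile μ (fun ω' => - X ω') α with hqdef
  -- integrability of the positive part functions
  have hintpos : ∀ s : ℝ, Integrable (fun ω => max (- X ω - s) 0) μ := by
    intro s
    have hb : Integrable (fun ω => max 0 (- X ω) + |s|) μ := hint.add (integrable_const _)
    refine hb.mono ((hY.sub measurable_const).max measurable_const).aestronglyMeasurable ?_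
    filter_upwards with ω
    rw [Real.norm_eq_abs, Real.norm_eq_abs, abs_of_nonneg (le_max_right _ _),
      abs_of_nonneg (add_nonneg (le_max_left _ _) (abs_nonneg s))]
    refine max_le ?_ (add_nonneg (le_max_left _ _) (abs_nonneg s))
    have h1 : - X ω ≤ max 0 (- X ω) := le_max_right _ _
    have h2 : -s ≤ |s| := neg_le_abs s
    linarith
  -- measurability of sets
  have hmge : ∀ s : ℝ, MeasurableSet {ω | s ≤ - X ω} :=
    fun s => measurableSet_le measurable_const hY
  have hmlt : ∀ s : ℝ, MeasurableSet {ω | - X ω < s} :=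
    fun s => measurableSet_lt hY measurable_const
  have hmgt : ∀ s : ℝ, MeasurableSet {ω | s < - X ω} :=
    fun s => measurableSet_lt measurable_const hY
  -- complement facts (real valued)
  have hsum : ∀ s : ℝ, (μ {ω | - X ω < s}).toReal + (μ {ω | s ≤ - X ω}).toReal = 1 := by
    intro s
    have hcompl : {ω | s ≤ - X ω} = {ω | - X ω < s}ᶜ := by
      ext ω; simp [not_lt]
    have h1 : μ {ω | - X ω < s} + μ {ω | s ≤ - X ω} = 1 := by
      rw [hcompl, ← measure_univ (μ := μ)]; exact measure_add_measure_compl (hmlt s)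
    rw [← ENNReal.toReal_add (measure_ne_top μ _) (measure_ne_top μ _), h1, ENNReal.toReal_one]
  have hsum' : ∀ s : ℝ, (μ {ω | - X ω ≤ s}).toReal + (μ {ω | s < - X ω}).toReal = 1 := by
    intro s
    have hcompl : {ω | s < - X ω} = {ω | - X ω ≤ s}ᶜ := by
      ext ω; simp only [mem_setOf_eq, mem_compl_iff, not_le]
    have h1 : μ {ω | - X ω ≤ s} + μ {ω | s < - X ω} = 1 := by
      rw [hcompl, ← measure_univ (μ := μ)]
      exact measure_add_measure_compl (measurableSet_le hY measurable_const)
    rw [← ENNReal.toReal_add (measure_ne_top μ _) (measure_ne_top μ _), h1, ENNReal.toReal_one]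
  -- integrability of -X on {s ≤ -X}
  have hIntOn : ∀ s : ℝ, IntegrableOn (fun ω => - X ω) {ω | s ≤ - X ω} μ := by
    intro s
    have hb : Integrable (fun ω => max (- X ω - s) 0 + |s|) (μ.restrict {ω | s ≤ - X ω}) :=
      ((hintpos s).restrict).add (integrable_const _)
    refine hb.mono hY.aestronglyMeasurable.restrict ?_
    rw [ae_restrict_iff' (hmge s)]
    filter_upwards with ω hω0
    have hω : s ≤ - X ω := hω0
    rw [Real.norm_eq_abs, Real.norm_eq_abs,
      abs_of_nonneg (add_nonneg (le_max_right _ _) (abs_nonneg s)), abs_le]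
    constructor
    · have h1 := neg_le_abs s
      have h2 : (0:ℝ) ≤ max (- X ω - s) 0 := le_max_right _ _
      linarith
    · have h1 : - X ω - s ≤ max (- X ω - s) 0 := le_max_left _ _
      have h2 := le_abs_self s
      linarith
  -- the key identity for the objective
  have hobj : ∀ s : ℝ, shortfallObjective μ X α s
      = (1 - α)⁻¹ * ((∫ ω, max (- X ω - s) 0 ∂μ) + s * (1 - α)) := by
    intro s
    have hind : (fun ω => max (- X ω - s) 0)
        = Set.indicator {ω | s ≤ - X ω} (fun ω => - X ω - s) := by
      funext ω
      by_cases h : ω ∈ {ω | s ≤ - X ω}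
      · rw [Set.indicator_of_mem h]
        exact max_eq_left (by simp only [mem_setOf_eq] at h; linarith)
      · rw [Set.indicator_of_notMem h]
        simp only [mem_setOf_eq, not_le] at h
        exact max_eq_right (by linarith)
    have hYint : (∫ ω in {ω | s ≤ - X ω}, - X ω ∂μ)
        = (∫ ω, max (- X ω - s) 0 ∂μ) + s * (μ {ω | s ≤ - X ω}).toReal := by
      have h1 : (∫ ω in {ω | s ≤ - X ω}, - X ω ∂μ)
          = (∫ ω in {ω | s ≤ - X ω}, ((- X ω - s) + s) ∂μ) := by
        congr 1; funext ω; ring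
      have hf : Integrable (fun ω => - X ω - s) (μ.restrict {ω | s ≤ - X ω}) :=
        (hIntOn s).sub (integrable_const s)
      rw [h1, integral_add hf (integrable_const s)]
      rw [hind, integral_indicator (hmge s), integral_const, smul_eq_mul,
        measureReal_restrict_apply_univ, measureReal_def]
      ring
    have hXint : (∫ ω in {ω | s ≤ - X ω}, X ω ∂μ)
        = - ∫ ω in {ω | s ≤ - X ω}, - X ω ∂μ := by
      rw [← integral_neg]
      congr 1; funext ω; ring
    rw [shortfallObjective, hXint, hYint]
    have hs := hsum s
    linear_combination ((1 - α)⁻¹ * s) * hs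
  -- ES is the objective at the quantile
  have hES : ES μ X α = shortfallObjective μ X α q := rfl
  -- quantile probability facts
  obtain ⟨hq1, hq2⟩ := quantile_spec μ (fun ω' => - X ω') hY α hα
  have hq1' : α ≤ (μ {ω | - X ω ≤ q}).toReal := by
    have := ENNReal.toReal_mono (measure_ne_top μ _) hq1
    rwa [ENNReal.toReal_ofReal hα.1.le] at this
  have hq2' : (μ {ω | - X ω < q}).toReal ≤ α := by
    have h := ENNReal.toReal_mono ENNReal.ofReal_ne_top hq2
    rwa [ENNReal.toReal_ofReal hα.1.le] at h
  have h1α : (0:ℝ) < 1 - α := by have := hα.2; linarith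
  -- the main inequality: G q ≤ G s
  have hG : ∀ s : ℝ, (∫ ω, max (- X ω - q) 0 ∂μ) + q * (1 - α)
      ≤ (∫ ω, max (- X ω - s) 0 ∂μ) + s * (1 - α) := by
    intro s
    rcases le_total q s with hqs | hsq
    · -- case q ≤ s
      have hpt : ∀ ω, max (- X ω - q) 0
          ≤ max (- X ω - s) 0 + Set.indicator {ω | q < - X ω} (fun _ => s - q) ω := by
        intro ω
        by_cases h : ω ∈ {ω | q < - X ω}
        · rw [Set.indicator_of_mem h]
          simp only [mem_setOf_eq] at h
          have h1 : - X ω - s ≤ max (- X ω - s) 0 := le_max_left _ _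
          refine max_le (by linarith) ?_
          have h2 : (0:ℝ) ≤ max (- X ω - s) 0 := le_max_right _ _
          have h3 : (0:ℝ) ≤ s - q := by linarith
          linarith
        · rw [Set.indicator_of_notMem h]
          simp only [mem_setOf_eq, not_lt] at h
          have h2 : (0:ℝ) ≤ max (- X ω - s) 0 := le_max_right _ _
          exact max_le (by linarith) (by linarith)
      have hint2 : Integrable (fun ω => max (- X ω - s) 0
          + Set.indicator {ω | q < - X ω} (fun _ => s - q) ω) μ :=
        (hintpos s).add ((integrable_const (s - q)).indicator (hmgt q))
      have hmon := integral_mono (hintpos q) hint2 hpt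
      rw [integral_add (hintpos s) ((integrable_const (s - q)).indicator (hmgt q)),
        integral_indicator (hmgt q), setIntegral_const, smul_eq_mul, measureReal_def] at hmon
      -- P[-X > q] ≤ 1 - α
      have hp : (μ {ω | q < - X ω}).toReal ≤ 1 - α := by
        have := hsum' q
        linarith
      nlinarith [mul_le_mul_of_nonneg_left hp (sub_nonneg.mpr hqs)]
    · -- case s ≤ q
      have hpt : ∀ ω, max (- X ω - q) 0 + Set.indicator {ω | q ≤ - X ω} (fun _ => q - s) ω
          ≤ max (- X ω - s) 0 := by
        intro ω
        by_cases h : ω ∈ {ω | q ≤ - X ω}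
        · rw [Set.indicator_of_mem h]
          simp only [mem_setOf_eq] at h
          have h1 : max (- X ω - q) 0 = - X ω - q := max_eq_left (by linarith)
          have h2 : max (- X ω - s) 0 = - X ω - s := max_eq_left (by linarith)
          rw [h1, h2]; ring_nf; linarith
        · rw [Set.indicator_of_notMem h]
          simp only [mem_setOf_eq, not_le] at h
          have h1 : max (- X ω - q) 0 = 0 := max_eq_right (by linarith)
          rw [h1, add_zero]
          exact le_max_right _ _
      have hint2 : Integrable (fun ω => max (- X ω - q) 0
          + Set.indicator {ω | q ≤ - X ω} (fun _ => q - s) ω) μ :=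
        (hintpos q).add ((integrable_const (q - s)).indicator (hmge q))
      have hmon := integral_mono hint2 (hintpos s) hpt
      rw [integral_add (hintpos q) ((integrable_const (q - s)).indicator (hmge q)),
        integral_indicator (hmge q), setIntegral_const, smul_eq_mul, measureReal_def] at hmon
      -- P[-X ≥ q] ≥ 1 - α
      have hp : 1 - α ≤ (μ {ω | q ≤ - X ω}).toReal := by
        have := hsum q
        linarith
      nlinarith [mul_le_mul_of_nonneg_left hp (sub_nonneg.mpr hsq)]
  constructor
  · exact ⟨q, hES.symm⟩
  · rintro y ⟨s, rfl⟩
    rw [hES, hobj q, hobj s]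
    exact mul_le_mul_of_nonneg_left (hG s) (inv_nonneg.mpr h1α.le)
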